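/- Let p be a prime, ω ∈ ℂ a primitive p-th root of unity, A an m×n matrix over ℤ/p and b ∈ (ℤ/p)^m. There exists a unital *-algebra homomorphism φ : ℂΓ(A,b) → 𝒜(syncLCS(A,b)) such that φ(J) = ω·1 and, for each j ∈ {1,…,n} and any i with j ∈ V_i, φ(g_j) = ∑_{x∈S_i(A,b)} ω^{x_j} a_{i,x}. Consequently φ descends to a unital *-homomorphism ℂΓ(A,b)/⟨J − ω·1⟩ → 𝒜(syncLCS(A,b)). -/

import Mathlib

set_option maxHeartbeats 1000000
noncomputable section

/-! ### The conjugate-linear star structure on a monoid algebra `ℂ[M]`,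
where `M` is a monoid with an (anti-multiplicative) star operation.
For a group `G` (with `star = ⁻¹`, see below) this is the usual star structure
`(λ·g)* = conj(λ)·g⁻¹` on the group `*`-algebra `ℂG`. -/

section MonoidAlgebraStar

variable {M : Type*} [Monoid M] [StarMul M]

/-- the star operation on `ℂ[M]`: `(λ·m)* = conj(λ)·(star m)` -/
noncomputable def mstar (f : MonoidAlgebra ℂ M) : MonoidAlgebra ℂ M :=
  Finsupp.equivMapDomain ⟨star, star, star_involutive, star_involutive⟩
    (Finsupp.mapRange (starRingEnd ℂ) (map_zero _) f.coeff) |> MonoidAlgebra.ofCoeff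

lemma mstar_apply (f : MonoidAlgebra ℂ M) (x : M) :
    (mstar f).coeff x = starRingEnd ℂ (f.coeff (star x)) := rfl

lemma mstar_single (a : M) (c : ℂ) :
    mstar (MonoidAlgebra.single a c) = MonoidAlgebra.single (star a) (starRingEnd ℂ c) := by
  classical
  ext x
  rw [mstar_apply, MonoidAlgebra.coeff_single, MonoidAlgebra.coeff_single]
  simp only [Finsupp.single_apply]
  by_cases h : a = star x
  · rw [if_pos h, if_pos (by rw [h, star_star])]
  · rw [if_neg h, if_neg (fun h2 => h (by rw [← h2, star_star])), map_zero]

lemma mstar_add (f g : MonoidAlgebra ℂ M) : mstar (f + g) = mstar f + mstar g := by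
  ext x
  exact map_add (starRingEnd ℂ) (f.coeff (star x)) (g.coeff (star x))

lemma mstar_zero : mstar (0 : MonoidAlgebra ℂ M) = 0 := by
  ext x
  exact map_zero (starRingEnd ℂ)

lemma mstar_mul (f g : MonoidAlgebra ℂ M) : mstar (f * g) = mstar g * mstar f := by
  induction f using MonoidAlgebra.induction_linear with
  | zero =>
      exact (congrArg mstar (zero_mul g)).trans (mstar_zero.trans
        ((mul_zero (mstar g)).symm.trans (congrArg _ mstar_zero.symm)))
  | add f1 f2 h1 h2 =>
      refine Eq.trans (congrArg mstar (@add_mul (MonoidAlgebra ℂ M) _ _ _ f1 f2 g)) ?_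
      rw [mstar_add, h1, h2, ← mul_add]
      exact congrArg (mstar g * ·) (mstar_add f1 f2).symm
  | single a c =>
    induction g using MonoidAlgebra.induction_linear with
    | zero =>
        exact (congrArg mstar (mul_zero _)).trans (mstar_zero.trans
          ((zero_mul _).symm.trans (congrArg (· * _) mstar_zero.symm)))
    | add g1 g2 h1 h2 =>
        refine Eq.trans (congrArg mstar (@mul_add (MonoidAlgebra ℂ M) _ _ _ _ g1 g2)) ?_
        rw [mstar_add, h1, h2, ← add_mul]
        exact congrArg (· * mstar (MonoidAlgebra.single a c)) (mstar_add g1 g2).symm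
    | single b d =>
      show mstar ((MonoidAlgebra.single a c) * (MonoidAlgebra.single b d)) =
        mstar (MonoidAlgebra.single b d) * mstar (MonoidAlgebra.single a c)
      rw [MonoidAlgebra.single_mul_single, mstar_single, mstar_single, mstar_single,
        MonoidAlgebra.single_mul_single, star_mul, map_mul, mul_comm (starRingEnd ℂ d)]

/-- the `*`-ring structure of `ℂ[M]` -/
noncomputable instance instMAStar : StarRing (MonoidAlgebra ℂ M) where
  star := mstar
  star_involutive f := by
    ext x
    calc (mstar (mstar f)).coeff x = starRingEnd ℂ (starRingEnd ℂ (f.coeff (star (star x)))) := rfl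
      _ = f.coeff (star (star x)) := Complex.conj_conj _
      _ = f.coeff x := congrArg (fun y => f.coeff y) (star_star x)
  star_mul := mstar_mul
  star_add := mstar_add

lemma star_of' (a : M) :
    star (MonoidAlgebra.of ℂ M a) = MonoidAlgebra.of ℂ M (star a) := by
  show mstar _ = _
  rw [show (MonoidAlgebra.of ℂ M a : MonoidAlgebra ℂ M) = MonoidAlgebra.single a 1 from rfl,
    mstar_single, map_one]
  rfl

end MonoidAlgebraStar

/-- On a group, `star g = g⁻¹`; together with the above this makes `ℂG` a group `*`-algebra
with `(λ·g)* = conj(λ)·g⁻¹`. -/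
instance groupStar {G : Type*} [Group G] : StarMul G where
  star := (·⁻¹)
  star_involutive := inv_inv
  star_mul := mul_inv_rev

lemma star_grp {G : Type*} [Group G] (g : G) : star g = g⁻¹ := rfl

section LinearSystem

variable {p m n : ℕ}

/-- `V_i`, the support of the `i`-th row of `A` -/
def Vset (A : Matrix (Fin m) (Fin n) (ZMod p)) (i : Fin m) : Finset (Fin n) :=
  Finset.univ.filter fun j => A i j ≠ 0

/-- `S_i(A,b)`: solutions of the `i`-th equation supported inside `V_i` -/
def Ssol [NeZero p] (A : Matrix (Fin m) (Fin n) (ZMod p)) (b : Fin m → ZMod p) (i : Fin m) :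
    Finset (Fin n → ZMod p) :=
  Finset.univ.filter fun x => (∑ j, A i j * x j) = b i ∧ ∀ j, x j ≠ 0 → j ∈ Vset A i

/-- `(x,y)` are incompatible solutions for rows `(i,k)` -/
def Incompat (A : Matrix (Fin m) (Fin n) (ZMod p)) (i k : Fin m)
    (x y : Fin n → ZMod p) : Prop :=
  ∃ j ∈ Vset A i ∩ Vset A k, x j ≠ y j

lemma Incompat.symm {A : Matrix (Fin m) (Fin n) (ZMod p)} {i k : Fin m}
    {x y : Fin n → ZMod p} (h : Incompat A i k x y) : Incompat A k i y x := by
  obtain ⟨j, hj, hne⟩ := h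
  exact ⟨j, by simpa [Finset.mem_inter, and_comm] using hj, hne.symm⟩

end LinearSystem

section GameAlgebra

variable {p m n : ℕ}

/-- the index set of the generators `a_{i,x}` of the game algebra: pairs `(i, x)` with
`x ∈ S_i(A,b)` -/
abbrev SyncGen [NeZero p] (A : Matrix (Fin m) (Fin n) (ZMod p)) (b : Fin m → ZMod p) : Type _ :=
  Σ i : Fin m, {x : Fin n → ZMod p // x ∈ Ssol A b i}

/-- the free unital complex `*`-algebra on a set `X` of self-adjoint generators -/
abbrev FreeStarAlg (X : Type*) := MonoidAlgebra ℂ (FreeMonoid X)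

/-- a generator of the free `*`-algebra -/
noncomputable def Xg {X : Type*} (x : X) : FreeStarAlg X :=
  MonoidAlgebra.of ℂ (FreeMonoid X) (FreeMonoid.of x)

lemma starX {X : Type*} (x : X) : star (Xg x) = Xg x := by
  rw [Xg, star_of', FreeMonoid.star_of]

/-- the defining relations of the game algebra `𝒜(syncLCS(A,b))`: the generators are
self-adjoint (automatic here) idempotents, for each row the generators sum to one, and
incompatible pairs are orthogonal. -/
inductive SyncRel [NeZero p] (A : Matrix (Fin m) (Fin n) (ZMod p)) (b : Fin m → ZMod p) :
    FreeStarAlg (SyncGen A b) → FreeStarAlg (SyncGen A b) → Prop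
  | idem (g : SyncGen A b) : SyncRel A b (Xg g * Xg g) (Xg g)
  | sum_one (i : Fin m) :
      SyncRel A b (∑ x ∈ (Ssol A b i).attach, Xg (⟨i, x⟩ : SyncGen A b)) 1
  | orth {i k : Fin m} (x : {x // x ∈ Ssol A b i}) (y : {y // y ∈ Ssol A b k})
      (h : Incompat A i k x.1 y.1) :
      SyncRel A b (Xg (⟨i, x⟩ : SyncGen A b) * Xg (⟨k, y⟩ : SyncGen A b)) 0

lemma SyncRel.star_closed [NeZero p] (A : Matrix (Fin m) (Fin n) (ZMod p)) (b : Fin m → ZMod p) :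
    ∀ a c, SyncRel A b a c → SyncRel A b (star a) (star c) := by
  intro a c h
  cases h with
  | idem g => rw [star_mul, starX]; exact SyncRel.idem g
  | sum_one i =>
      rw [star_sum, star_one]
      simp only [starX]
      exact SyncRel.sum_one i
  | orth x y h =>
      rw [star_mul, starX, starX, star_zero]
      exact SyncRel.orth y x h.symm

/-- The game algebra `𝒜(syncLCS(A,b))`: the quotient of the free `*`-algebra on the
generators `a_{i,x}` by the `*`-ideal generated by the game relations. -/
abbrev GameAlg [NeZero p] (A : Matrix (Fin m) (Fin n) (ZMod p)) (b : Fin m → ZMod p) :=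
  RingQuot (SyncRel A b)

noncomputable instance [NeZero p] (A : Matrix (Fin m) (Fin n) (ZMod p)) (b : Fin m → ZMod p) :
    StarRing (GameAlg A b) :=
  RingQuot.starRing _ (SyncRel.star_closed A b)

/-- the generator `a_{i,x}` of the game algebra `𝒜(syncLCS(A,b))` -/
noncomputable def agen [NeZero p] (A : Matrix (Fin m) (Fin n) (ZMod p)) (b : Fin m → ZMod p)
    (i : Fin m) (x : Fin n → ZMod p) (hx : x ∈ Ssol A b i) : GameAlg A b :=
  RingQuot.mkAlgHom ℂ (SyncRel A b) (Xg ⟨i, ⟨x, hx⟩⟩)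

end GameAlgebra

section SolutionGroup

variable {p m n : ℕ}

open scoped commutatorElement

/-- the relators of the solution group `Γ(A,b)`; the generator `none` plays the role of `J`
and `some j` plays the role of `g_j`.  The relators are `g_j^p`, `J^p`, `[g_j, J]`,
`[g_j, g_ℓ]` for `j,ℓ ∈ V_i`, and `(∏_j g_j^{A_{i,j}})·J^{-b_i}`. -/
def solRels (p : ℕ) (A : Matrix (Fin m) (Fin n) (ZMod p)) (b : Fin m → ZMod p) :
    Set (FreeGroup (Option (Fin n))) :=
  { w | (∃ j : Fin n, w = FreeGroup.of (some j) ^ p)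
    ∨ w = FreeGroup.of (none : Option (Fin n)) ^ p
    ∨ (∃ j : Fin n, w = ⁅FreeGroup.of (some j), FreeGroup.of (none : Option (Fin n))⁆)
    ∨ (∃ i : Fin m, ∃ j l : Fin n, j ∈ Vset A i ∧ l ∈ Vset A i ∧
        w = ⁅FreeGroup.of (some j), FreeGroup.of (some l)⁆)
    ∨ (∃ i : Fin m,
        w = ((List.finRange n).map fun j => FreeGroup.of (some j) ^ ((A i j).val)).prod *
          FreeGroup.of (none : Option (Fin n)) ^ (-(((b i).val : ℤ)))) }

/-- the solution group `Γ(A,b)` -/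
abbrev SolutionGroup (p : ℕ) (A : Matrix (Fin m) (Fin n) (ZMod p)) (b : Fin m → ZMod p) :=
  PresentedGroup (solRels p A b)

/-- the generator `g_j` of the solution group -/
def gj {p : ℕ} {A : Matrix (Fin m) (Fin n) (ZMod p)} {b : Fin m → ZMod p} (j : Fin n) :
    SolutionGroup p A b := PresentedGroup.of (some j)

/-- the central generator `J` of the solution group -/
def Jgen {p : ℕ} {A : Matrix (Fin m) (Fin n) (ZMod p)} {b : Fin m → ZMod p} :
    SolutionGroup p A b := PresentedGroup.of none

/-- `J` as an element of the group `*`-algebra `ℂΓ(A,b)` -/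
noncomputable def Jga (p : ℕ) (A : Matrix (Fin m) (Fin n) (ZMod p)) (b : Fin m → ZMod p) :
    MonoidAlgebra ℂ (SolutionGroup p A b) :=
  MonoidAlgebra.of ℂ _ Jgen

/-- the relation generating the two-sided `*`-ideal `⟨J - ω·1⟩` of `ℂΓ(A,b)` -/
inductive QuotRel (ω : ℂ) (p : ℕ) (A : Matrix (Fin m) (Fin n) (ZMod p)) (b : Fin m → ZMod p) :
    MonoidAlgebra ℂ (SolutionGroup p A b) → MonoidAlgebra ℂ (SolutionGroup p A b) → Prop
  | base : QuotRel ω p A b (Jga p A b - algebraMap ℂ _ ω) 0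
  | star_base : QuotRel ω p A b (star (Jga p A b - algebraMap ℂ _ ω)) 0

/-- the quotient `*`-algebra `ℂΓ(A,b)/⟨J-ω·1⟩` -/
abbrev SolQuot (ω : ℂ) (p : ℕ) (A : Matrix (Fin m) (Fin n) (ZMod p)) (b : Fin m → ZMod p) :=
  RingQuot (QuotRel ω p A b)

noncomputable instance (ω : ℂ) (p : ℕ) (A : Matrix (Fin m) (Fin n) (ZMod p))
    (b : Fin m → ZMod p) : StarRing (SolQuot ω p A b) := by
  refine RingQuot.starRing _ ?_
  intro a c h
  cases h with
  | base => rw [star_zero]; exact QuotRel.star_base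
  | star_base => rw [star_zero, star_star]; exact QuotRel.base

end SolutionGroup

section Statement4Aux

variable {p m n : ℕ} [NeZero p]
variable (A : Matrix (Fin m) (Fin n) (ZMod p)) (b : Fin m → ZMod p)

lemma mkGame_eq (x : FreeStarAlg (SyncGen A b)) :
    RingQuot.mkAlgHom ℂ (SyncRel A b) x = ⟨Quot.mk _ x⟩ := by
  rw [RingQuot.mkAlgHom_def]
  show RingQuot.mkRingHom (SyncRel A b) x = _
  rw [RingQuot.mkRingHom_def]
  rfl

lemma star_mkGame (x : FreeStarAlg (SyncGen A b)) :
    star (RingQuot.mkAlgHom ℂ (SyncRel A b) x) = RingQuot.mkAlgHom ℂ (SyncRel A b) (star x) := by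
  rw [mkGame_eq, mkGame_eq]
  rfl

lemma star_agen (i : Fin m) (x : Fin n → ZMod p) (hx : x ∈ Ssol A b i) :
    star (agen A b i x hx) = agen A b i x hx := by
  rw [agen, star_mkGame, starX]

lemma agen_idem (i : Fin m) (x : Fin n → ZMod p) (hx : x ∈ Ssol A b i) :
    agen A b i x hx * agen A b i x hx = agen A b i x hx := by
  rw [agen, ← map_mul]
  exact RingQuot.mkAlgHom_rel ℂ (SyncRel.idem _)

lemma agen_sum (i : Fin m) : ∑ x ∈ (Ssol A b i).attach, agen A b i x.1 x.2 = 1 := by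
  have h := RingQuot.mkAlgHom_rel ℂ (SyncRel.sum_one (A := A) (b := b) i)
  rw [map_sum, map_one] at h
  exact h

lemma agen_orth {i k : Fin m} {x y : Fin n → ZMod p} (hx : x ∈ Ssol A b i)
    (hy : y ∈ Ssol A b k) (h : Incompat A i k x y) :
    agen A b i x hx * agen A b k y hy = 0 := by
  rw [agen, agen, ← map_mul]
  have h2 := RingQuot.mkAlgHom_rel ℂ (SyncRel.orth (A := A) (b := b) ⟨x, hx⟩ ⟨y, hy⟩ h)
  rwa [map_zero] at h2

lemma incompat_of_ne {i : Fin m} {x y : Fin n → ZMod p} (hx : x ∈ Ssol A b i)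
    (hy : y ∈ Ssol A b i) (hne : x ≠ y) : Incompat A i i x y := by
  obtain ⟨j, hj⟩ : ∃ j, x j ≠ y j := by
    by_contra h; push_neg at h; exact hne (funext h)
  have hx' := (Finset.mem_filter.mp hx).2.2
  have hy' := (Finset.mem_filter.mp hy).2.2
  have hjV : j ∈ Vset A i := by
    by_cases h0 : x j = 0
    · exact hy' j fun h1 => hj (by rw [h0, h1])
    · exact hx' j h0
  exact ⟨j, Finset.mem_inter.mpr ⟨hjV, hjV⟩, hj⟩

/-- `∑_{x ∈ S_i} c(x)·a_{i,x}` -/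
noncomputable def uRow (i : Fin m) (c : (Fin n → ZMod p) → ℂ) : GameAlg A b :=
  ∑ x ∈ (Ssol A b i).attach, c x.1 • agen A b i x.1 x.2

lemma uRow_congr (i : Fin m) {c d : (Fin n → ZMod p) → ℂ}
    (h : ∀ x ∈ Ssol A b i, c x = d x) : uRow A b i c = uRow A b i d :=
  Finset.sum_congr rfl fun x _ => by rw [h x.1 x.2]

lemma uRow_mul (i : Fin m) (c d : (Fin n → ZMod p) → ℂ) :
    uRow A b i c * uRow A b i d = uRow A b i fun x => c x * d x := by
  rw [uRow, uRow, uRow, Finset.sum_mul_sum]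
  refine Finset.sum_congr rfl fun x _ => ?_
  rw [Finset.sum_eq_single x]
  · rw [smul_mul_assoc, mul_smul_comm, smul_smul, agen_idem]
  · intro y _ hyx
    have hne : x.1 ≠ y.1 := fun h => hyx (Subtype.ext h.symm)
    rw [smul_mul_assoc, mul_smul_comm, smul_smul,
      agen_orth A b x.2 y.2 (incompat_of_ne A b x.2 y.2 hne), smul_zero]
  · intro hx; exact absurd (Finset.mem_attach _ x) hx

lemma uRow_one (i : Fin m) : uRow A b i (fun _ => (1 : ℂ)) = 1 := by
  rw [uRow]
  simp only [one_smul]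
  exact agen_sum A b i

lemma uRow_const (i : Fin m) (c : ℂ) :
    uRow A b i (fun _ => c) = algebraMap ℂ (GameAlg A b) c := by
  rw [uRow, ← Finset.smul_sum, agen_sum, Algebra.algebraMap_eq_smul_one]

lemma uRow_pow (i : Fin m) (c : (Fin n → ZMod p) → ℂ) (k : ℕ) :
    uRow A b i c ^ k = uRow A b i fun x => c x ^ k := by
  induction k with
  | zero => simp only [pow_zero]; rw [uRow_one]
  | succ k ih =>
      rw [pow_succ, ih, uRow_mul]
      exact uRow_congr A b i fun x _ => (pow_succ (c x) k).symm

lemma uRow_list_prod (i : Fin m) (c : Fin n → (Fin n → ZMod p) → ℂ) (L : List (Fin n)) :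
    (L.map fun j => uRow A b i (c j)).prod = uRow A b i fun x => (L.map fun j => c j x).prod := by
  induction L with
  | nil => simp only [List.map_nil, List.prod_nil]; rw [uRow_one]
  | cons hd tl ih =>
      rw [List.map_cons, List.prod_cons, ih, uRow_mul]
      exact uRow_congr A b i fun x _ => by rw [List.map_cons, List.prod_cons]

lemma star_algebraMap_free {X : Type*} (c : ℂ) :
    star (algebraMap ℂ (FreeStarAlg X) c) = algebraMap ℂ (FreeStarAlg X) (starRingEnd ℂ c) := by
  have h1 : algebraMap ℂ (FreeStarAlg X) c = MonoidAlgebra.single 1 c := by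
    rw [Algebra.algebraMap_eq_smul_one]
    show c • MonoidAlgebra.single (1 : FreeMonoid X) (1 : ℂ) = _
    rw [MonoidAlgebra.smul_single', mul_one]
  have h2 : algebraMap ℂ (FreeStarAlg X) (starRingEnd ℂ c) =
      MonoidAlgebra.single 1 (starRingEnd ℂ c) := by
    rw [Algebra.algebraMap_eq_smul_one]
    show _ • MonoidAlgebra.single (1 : FreeMonoid X) (1 : ℂ) = _
    rw [MonoidAlgebra.smul_single', mul_one]
  rw [h1, h2]
  have h3 : star (MonoidAlgebra.single (1 : FreeMonoid X) c) =
      MonoidAlgebra.single (star (1 : FreeMonoid X)) (starRingEnd ℂ c) := mstar_single 1 c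
  rw [h3, star_one]

lemma star_algebraMap_game (c : ℂ) :
    star (algebraMap ℂ (GameAlg A b) c) = algebraMap ℂ (GameAlg A b) (starRingEnd ℂ c) := by
  rw [← (RingQuot.mkAlgHom ℂ (SyncRel A b)).commutes c, star_mkGame, star_algebraMap_free,
    (RingQuot.mkAlgHom ℂ (SyncRel A b)).commutes]

lemma star_smul_game (c : ℂ) (y : GameAlg A b) :
    star (c • y) = starRingEnd ℂ c • star y := by
  rw [Algebra.smul_def, star_mul, star_algebraMap_game, ← Algebra.commutes, ← Algebra.smul_def]

lemma uRow_star (i : Fin m) (c : (Fin n → ZMod p) → ℂ) :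
    star (uRow A b i c) = uRow A b i fun x => starRingEnd ℂ (c x) := by
  rw [uRow, star_sum]
  exact Finset.sum_congr rfl fun x _ => by rw [star_smul_game, star_agen]

lemma uRow_rows {i k : Fin m} {j : Fin n} (hi : j ∈ Vset A i) (hk : j ∈ Vset A k)
    (f : ZMod p → ℂ) :
    uRow A b i (fun x => f (x j)) = uRow A b k (fun x => f (x j)) := by
  have h1 : uRow A b i (fun x => f (x j)) * uRow A b k (fun _ => 1)
      = uRow A b i (fun _ => 1) * uRow A b k (fun x => f (x j)) := by
    rw [uRow, uRow, uRow, uRow, Finset.sum_mul_sum, Finset.sum_mul_sum]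
    refine Finset.sum_congr rfl fun x _ => Finset.sum_congr rfl fun y _ => ?_
    by_cases h : Incompat A i k x.1 y.1
    · rw [smul_mul_assoc, mul_smul_comm, smul_mul_assoc, mul_smul_comm,
        agen_orth A b x.2 y.2 h, smul_zero, smul_zero, smul_zero, smul_zero]
    · have hxy : x.1 j = y.1 j := by
        by_contra hne
        exact h ⟨j, Finset.mem_inter.mpr ⟨hi, hk⟩, hne⟩
      rw [hxy, one_smul, one_smul, smul_mul_assoc, mul_smul_comm]
  rwa [uRow_one, uRow_one, mul_one, one_mul] at h1

/-- the image of the generator `g_j` in the game algebra -/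
noncomputable def uElt (ω : ℂ) (j : Fin n) : GameAlg A b :=
  if h : ∃ i, j ∈ Vset A i then uRow A b h.choose fun x => ω ^ (x j).val else 1

lemma uElt_eq (ω : ℂ) {j : Fin n} {i : Fin m} (hi : j ∈ Vset A i) :
    uElt A b ω j = uRow A b i fun x => ω ^ (x j).val := by
  have h : ∃ i, j ∈ Vset A i := ⟨i, hi⟩
  rw [uElt, dif_pos h]
  exact uRow_rows A b h.choose_spec hi fun v => ω ^ v.val

lemma pow_mod_aux {ω : ℂ} (hωp : ω ^ p = 1) (a : ℕ) : ω ^ a = ω ^ (a % p) := by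
  conv_lhs => rw [← Nat.div_add_mod a p]
  rw [pow_add, pow_mul, hωp, one_pow, one_mul]

lemma pow_eq_of_cast {ω : ℂ} (hωp : ω ^ p = 1) {a c : ℕ} (h : (a : ZMod p) = (c : ZMod p)) :
    ω ^ a = ω ^ c := by
  rw [pow_mod_aux hωp a, pow_mod_aux hωp c]
  exact congrArg (fun t => ω ^ t) ((ZMod.natCast_eq_natCast_iff a c p).mp h)

lemma uElt_pow_p {ω : ℂ} (hωp : ω ^ p = 1) (j : Fin n) : uElt A b ω j ^ p = 1 := by
  by_cases h : ∃ i, j ∈ Vset A i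
  · obtain ⟨i, hi⟩ := h
    rw [uElt_eq A b ω hi, uRow_pow]
    have he : (fun x : Fin n → ZMod p => (ω ^ (x j).val) ^ p) = fun _ => (1 : ℂ) :=
      funext fun x => by rw [← pow_mul, mul_comm, pow_mul, hωp, one_pow]
    rw [he, uRow_one]
  · rw [uElt, dif_neg h, one_pow]

lemma mkSol_eq (ω : ℂ) (x : MonoidAlgebra ℂ (SolutionGroup p A b)) :
    RingQuot.mkAlgHom ℂ (QuotRel ω p A b) x = ⟨Quot.mk _ x⟩ := by
  rw [RingQuot.mkAlgHom_def]
  show RingQuot.mkRingHom (QuotRel ω p A b) x = _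
  rw [RingQuot.mkRingHom_def]
  rfl

lemma star_mkSol (ω : ℂ) (x : MonoidAlgebra ℂ (SolutionGroup p A b)) :
    star (RingQuot.mkAlgHom ℂ (QuotRel ω p A b) x)
      = RingQuot.mkAlgHom ℂ (QuotRel ω p A b) (star x) := by
  rw [mkSol_eq, mkSol_eq]
  rfl

end Statement4Aux
/-- There is a unital `*`-homomorphism `φ : ℂΓ(A,b) → 𝒜(syncLCS(A,b))`
with `φ(J) = ω·1` and `φ(g_j) = ∑_{x ∈ S_i} ω^{x_j} a_{i,x}` for any `i` with `j ∈ V_i`;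
it descends to the quotient `ℂΓ(A,b)/⟨J-ω·1⟩`. -/
theorem statement4 (p : ℕ) [Fact p.Prime] {m n : ℕ} (ω : ℂ) (hω : IsPrimitiveRoot ω p)
    (A : Matrix (Fin m) (Fin n) (ZMod p)) (b : Fin m → ZMod p) :
    ∃ φ : MonoidAlgebra ℂ (SolutionGroup p A b) →⋆ₐ[ℂ] GameAlg A b,
      φ (Jga p A b) = algebraMap ℂ (GameAlg A b) ω ∧
      (∀ (j : Fin n) (i : Fin m), j ∈ Vset A i →
        φ (MonoidAlgebra.of ℂ (SolutionGroup p A b) (gj j)) =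
          ∑ x ∈ (Ssol A b i).attach, (ω ^ ((x.1 j).val) : ℂ) • agen A b i x.1 x.2) ∧
      ∃ φbar : SolQuot ω p A b →⋆ₐ[ℂ] GameAlg A b,
        ∀ u : MonoidAlgebra ℂ (SolutionGroup p A b),
          φbar (RingQuot.mkAlgHom ℂ (QuotRel ω p A b) u) = φ u := by
  classical
  have hp : p.Prime := Fact.out
  have hp0 : p ≠ 0 := hp.ne_zero
  have hp1 : p - 1 + 1 = p := Nat.succ_pred_eq_of_pos hp.pos
  have hωp : ω ^ p = 1 := hω.pow_eq_one
  have hconj : ∀ z : ℂ, z ^ p = 1 → starRingEnd ℂ z = z ^ (p - 1) := by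
    intro z hz
    have hnorm : ‖z‖ = 1 := Complex.norm_eq_one_of_pow_eq_one hz hp0
    have h2 : z ^ (p - 1) * z = 1 := by rw [← pow_succ, hp1, hz]
    rw [← Complex.inv_eq_conj hnorm, eq_comm]
    exact eq_inv_of_mul_eq_one_left h2
  have hconjpow : ∀ v : ℕ, starRingEnd ℂ (ω ^ v) = (ω ^ v) ^ (p - 1) := fun v => by
    refine hconj (ω ^ v) ?_
    rw [← pow_mul, mul_comm, pow_mul, hωp, one_pow]
  have hUa : ∀ j : Fin n, uElt A b ω j * uElt A b ω j ^ (p - 1) = 1 := fun j => by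
    rw [← pow_succ', hp1, uElt_pow_p A b hωp]
  have hUb : ∀ j : Fin n, uElt A b ω j ^ (p - 1) * uElt A b ω j = 1 := fun j => by
    rw [← pow_succ, hp1, uElt_pow_p A b hωp]
  let U : Option (Fin n) → (GameAlg A b)ˣ := fun o =>
    match o with
    | none =>
        ⟨algebraMap ℂ (GameAlg A b) ω, algebraMap ℂ (GameAlg A b) (ω ^ (p - 1)),
          by rw [← map_mul, ← pow_succ', hp1, hωp, map_one],
          by rw [← map_mul, ← pow_succ, hp1, hωp, map_one]⟩
    | some j => ⟨uElt A b ω j, uElt A b ω j ^ (p - 1), hUa j, hUb j⟩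
  have hUnone : (U none).val = algebraMap ℂ (GameAlg A b) ω := rfl
  have hUsome : ∀ j, (U (some j)).val = uElt A b ω j := fun j => rfl
  -- the relations hold
  have hrels : ∀ r ∈ solRels p A b, FreeGroup.lift U r = 1 := by
    intro r hr
    rcases hr with ⟨j, rfl⟩ | rfl | ⟨j, rfl⟩ | ⟨i, j, l, hj, hl, rfl⟩ | ⟨i, rfl⟩
    · rw [map_pow, FreeGroup.lift_apply_of]
      refine Units.ext ?_
      rw [Units.val_pow_eq_pow_val, hUsome, uElt_pow_p A b hωp, Units.val_one]
    · rw [map_pow, FreeGroup.lift_apply_of]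
      refine Units.ext ?_
      rw [Units.val_pow_eq_pow_val, hUnone, ← map_pow, hωp, map_one, Units.val_one]
    · rw [map_commutatorElement, FreeGroup.lift_apply_of, FreeGroup.lift_apply_of,
        commutatorElement_eq_one_iff_commute]
      have hv : (U (some j)).val * (U none).val = (U none).val * (U (some j)).val := by
        rw [hUnone, hUsome]
        exact (Algebra.commutes ω (uElt A b ω j)).symm
      exact Units.ext (by rw [Units.val_mul, Units.val_mul]; exact hv)
    · rw [map_commutatorElement, FreeGroup.lift_apply_of, FreeGroup.lift_apply_of,
        commutatorElement_eq_one_iff_commute]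
      have hv : (U (some j)).val * (U (some l)).val = (U (some l)).val * (U (some j)).val := by
        rw [hUsome, hUsome, uElt_eq A b ω hj, uElt_eq A b ω hl, uRow_mul, uRow_mul]
        exact uRow_congr A b i fun x _ => mul_comm _ _
      exact Units.ext (by rw [Units.val_mul, Units.val_mul]; exact hv)
    · rw [map_mul, map_zpow, map_list_prod, List.map_map, FreeGroup.lift_apply_of,
        zpow_neg, zpow_natCast, mul_inv_eq_one]
      refine Units.ext ?_
      have hmap : (⇑(FreeGroup.lift U)) ∘ (fun j => FreeGroup.of (some j) ^ ((A i j).val))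
          = fun j => U (some j) ^ ((A i j).val) :=
        funext fun j => by rw [Function.comp_apply, map_pow, FreeGroup.lift_apply_of]
      rw [hmap]
      have hval : (((List.finRange n).map fun j => U (some j) ^ ((A i j).val)).prod).val
          = ((List.finRange n).map fun j => (uElt A b ω j) ^ ((A i j).val)).prod := by
        rw [show ((((List.finRange n).map fun j => U (some j) ^ ((A i j).val)).prod).val)
            = (Units.coeHom (GameAlg A b))
              (((List.finRange n).map fun j => U (some j) ^ ((A i j).val)).prod) from rfl,
          map_list_prod, List.map_map]
        refine congrArg List.prod (congrArg (fun f => List.map f (List.finRange n)) ?_)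
        funext j
        show ((U (some j) ^ ((A i j).val)).val) = (uElt A b ω j) ^ ((A i j).val)
        rw [Units.val_pow_eq_pow_val, hUsome]
      have hfac : ∀ j : Fin n, uElt A b ω j ^ ((A i j).val)
          = uRow A b i fun x => ω ^ ((x j).val * (A i j).val) := by
        intro j
        by_cases hjv : j ∈ Vset A i
        · rw [uElt_eq A b ω hjv, uRow_pow]
          exact uRow_congr A b i fun x _ => by rw [← pow_mul]
        · have hA : A i j = 0 := by
            by_contra hne
            exact hjv (Finset.mem_filter.mpr ⟨Finset.mem_univ j, hne⟩)
          rw [hA, ZMod.val_zero, pow_zero,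
            show (fun x : Fin n → ZMod p => ω ^ ((x j).val * 0)) = fun _ => (1 : ℂ) from
              funext fun x => by rw [mul_zero, pow_zero], uRow_one]
      have hlist : ((List.finRange n).map fun j => (uElt A b ω j) ^ ((A i j).val)).prod
          = uRow A b i fun x => ω ^ ∑ j, (x j).val * (A i j).val := by
        rw [show (fun j => (uElt A b ω j) ^ ((A i j).val))
            = fun j => uRow A b i fun x => ω ^ ((x j).val * (A i j).val) from funext hfac,
          uRow_list_prod]
        refine uRow_congr A b i fun x _ => ?_
        rw [← Fin.prod_univ_def, Finset.prod_pow_eq_pow_sum]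
      have hrowval : uRow A b i (fun x => ω ^ ∑ j, (x j).val * (A i j).val)
          = uRow A b i fun _ => ω ^ (b i).val := by
        refine uRow_congr A b i fun x hx => ?_
        have hxe : (∑ j, A i j * x j) = b i := (Finset.mem_filter.mp hx).2.1
        refine pow_eq_of_cast hωp ?_
        push_cast [ZMod.natCast_val, ZMod.cast_id]
        rw [← hxe]
        exact Finset.sum_congr rfl fun j _ => mul_comm _ _
      rw [hval, hlist, hrowval, uRow_const, Units.val_pow_eq_pow_val, hUnone, ← map_pow]
  -- the group homomorphism and its properties
  let Ψ : SolutionGroup p A b →* (GameAlg A b)ˣ := PresentedGroup.toGroup hrels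
  let Φ : SolutionGroup p A b →* GameAlg A b := (Units.coeHom (GameAlg A b)).comp Ψ
  have hΨof : ∀ x, Ψ (PresentedGroup.of x) = U x := fun x => PresentedGroup.toGroup.of hrels
  have hΦJ : Φ Jgen = algebraMap ℂ (GameAlg A b) ω := by
    show (Ψ (PresentedGroup.of none)).val = _
    rw [hΨof]
  have hΦg : ∀ j, Φ (gj j) = uElt A b ω j := fun j => by
    show (Ψ (PresentedGroup.of (some j))).val = _
    rw [hΨof]
  have hstar_uElt : ∀ j, star (uElt A b ω j) = uElt A b ω j ^ (p - 1) := by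
    intro j
    by_cases h : ∃ i, j ∈ Vset A i
    · obtain ⟨i, hi⟩ := h
      rw [uElt_eq A b ω hi, uRow_star, uRow_pow]
      exact uRow_congr A b i fun x _ => hconjpow ((x j).val)
    · rw [uElt, dif_neg h, star_one, one_pow]
  have hΦstar : ∀ g : SolutionGroup p A b, star (Φ g) = Φ g⁻¹ := by
    have key : ∀ w : FreeGroup (Option (Fin n)),
        star ((Ψ ((PresentedGroup.mk (solRels p A b)) w)).val)
          = ((Ψ ((PresentedGroup.mk (solRels p A b)) w))⁻¹).val := by
      intro w
      induction w using FreeGroup.induction_on with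
      | C1 => rw [map_one, map_one, Units.val_one, star_one, inv_one, Units.val_one]
      | of x =>
          have hx : (PresentedGroup.mk (solRels p A b))
              (FreeGroup.of x : FreeGroup (Option (Fin n))) = PresentedGroup.of x := rfl
          rw [hx, hΨof]
          cases x with
          | none =>
              show star (algebraMap ℂ (GameAlg A b) ω) = algebraMap ℂ (GameAlg A b) (ω ^ (p - 1))
              rw [star_algebraMap_game A b, hconj ω hωp]
          | some j =>
              show star (uElt A b ω j) = uElt A b ω j ^ (p - 1)
              exact hstar_uElt j
      | inv_of x ih =>
          simp only [map_inv]
          rw [inv_inv, ← ih, star_star]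
      | mul x y ihx ihy =>
          simp only [map_mul]
          rw [Units.val_mul, star_mul, mul_inv_rev, Units.val_mul, ihx, ihy]
    intro g
    obtain ⟨w, rfl⟩ := PresentedGroup.mk_surjective (solRels p A b) g
    show star ((Ψ ((PresentedGroup.mk (solRels p A b)) w)).val)
      = (Ψ (((PresentedGroup.mk (solRels p A b)) w)⁻¹)).val
    rw [map_inv]
    exact key w
  -- the algebra homomorphism
  let φ : MonoidAlgebra ℂ (SolutionGroup p A b) →ₐ[ℂ] GameAlg A b :=
    MonoidAlgebra.lift ℂ (GameAlg A b) (SolutionGroup p A b) Φ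
  have hφ_of : ∀ g, φ (MonoidAlgebra.of ℂ (SolutionGroup p A b) g) = Φ g := fun g =>
    MonoidAlgebra.lift_of Φ g
  have hφstar : ∀ f, φ (star f) = star (φ f) := by
    intro f
    induction f using MonoidAlgebra.induction_linear with
    | zero => rw [star_zero, map_zero, star_zero]
    | add f g hf hg => rw [star_add, map_add, map_add, star_add, hf, hg]
    | single g c =>
        have h1 : star (MonoidAlgebra.single g c)
            = MonoidAlgebra.single g⁻¹ (starRingEnd ℂ c) := mstar_single g c
        rw [h1, MonoidAlgebra.lift_single, MonoidAlgebra.lift_single, star_smul_game A b,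
          hΦstar g]
  refine ⟨⟨φ, hφstar⟩, ?_, ?_, ?_⟩
  · show φ (Jga p A b) = algebraMap ℂ (GameAlg A b) ω
    rw [Jga, hφ_of, hΦJ]
  · intro j i hi
    show φ (MonoidAlgebra.of ℂ (SolutionGroup p A b) (gj j)) = _
    rw [hφ_of, hΦg j, uElt_eq A b ω hi, uRow]
  · have hrel : ∀ ⦃x y⦄, QuotRel ω p A b x y → φ x = φ y := by
      intro x y h
      cases h with
      | base => rw [map_zero, map_sub, AlgHom.commutes, Jga, hφ_of, hΦJ, sub_self]
      | star_base =>
          rw [map_zero, hφstar, map_sub, AlgHom.commutes, Jga, hφ_of, hΦJ, sub_self, star_zero]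
    let φbar : SolQuot ω p A b →ₐ[ℂ] GameAlg A b := RingQuot.liftAlgHom ℂ ⟨φ, hrel⟩
    have hφbar : ∀ u, φbar (RingQuot.mkAlgHom ℂ (QuotRel ω p A b) u) = φ u := fun u => by
      rw [show φbar = RingQuot.liftAlgHom ℂ ⟨φ, hrel⟩ from rfl,
        RingQuot.liftAlgHom_mkAlgHom_apply]
    have hφbar_star : ∀ q, φbar (star q) = star (φbar q) := by
      intro q
      obtain ⟨u, rfl⟩ := RingQuot.mkAlgHom_surjective ℂ (QuotRel ω p A b) q
      rw [star_mkSol A b ω, hφbar, hφbar, hφstar]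
    exact ⟨⟨φbar, hφbar_star⟩, fun u => hφbar u⟩


end
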